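/- arXiv:0812.4322 — 4 statements merged into one kernel-verified Lean document; each statement's English description precedes it below -/
import Mathlib

section
/- If a pizza is cut into an even number n of slices arranged in a circle, then Alice has a strategy (in the alternating-turn game under the Polite Pizza Protocol, with Alice moving first) guaranteeing her slices of total size at least half of the pizza. Specifically, partitioning the slices into two classes by parity of position, Alice takes a slice from the larger class and thereafter always makes shifts, forcing Bob to take only slices of the other class. -/
/-- Adjacency of slices on the circular pizza with `n` slices. -/
def adj (n : ℕ) (i j : Fin n) : Prop :=
  (i.1 + 1) % n = j.1 ∨ (j.1 + 1) % n = i.1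

instance (n : ℕ) (i j : Fin n) : Decidable (adj n i j) := by
  unfold adj; infer_instance

/-- `h` lists the slices taken so far, in the order they were taken.
It is a valid (partial) play of the Polite Pizza Protocol if no slice is taken
twice and every slice except the first is adjacent to a previously taken one. -/
def ValidHist (n : ℕ) (h : List (Fin n)) : Prop :=
  h.Nodup ∧ ∀ (k : ℕ) (hk : k < h.length), 0 < k →
    ∃ (j : ℕ) (hj : j < k), adj n (h.get ⟨k, hk⟩) (h.get ⟨j, hj.trans hk⟩)

/-- `m` is a legal next slice after history `h`. -/
def ValidMove (n : ℕ) (h : List (Fin n)) (m : Fin n) : Prop :=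
  m ∉ h ∧ (h = [] ∨ ∃ x ∈ h, adj n m x)

/-- Total size of the slices taken at (0-based) turns satisfying `f`. -/
def gainOn (n : ℕ) (P : Fin n → ℝ) (f : ℕ → Bool) (l : List (Fin n)) : ℝ :=
  ((((List.range l.length).zip l).filter (fun p => f p.1)).map (fun p => P p.2)).sum

/-- Alice moves at even turns (0-based), Bob at odd turns. -/
def isAlice (k : ℕ) : Bool := k % 2 == 0
def isBob (k : ℕ) : Bool := k % 2 == 1

def aliceGain (n : ℕ) (P : Fin n → ℝ) (l : List (Fin n)) : ℝ := gainOn n P isAlice l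
def bobGain (n : ℕ) (P : Fin n → ℝ) (l : List (Fin n)) : ℝ := gainOn n P isBob l

/-- The play `l` is consistent with the strategy `s` used at the turns satisfying `f`. -/
def Consistent (n : ℕ) (f : ℕ → Bool) (s : List (Fin n) → Fin n) (l : List (Fin n)) : Prop :=
  ∀ (k : ℕ) (hk : k < l.length), f k → l.get ⟨k, hk⟩ = s (l.take k)

/-- The strategy `s`, used at turns satisfying `f`, always produces legal moves. -/
def Legal (n : ℕ) (f : ℕ → Bool) (s : List (Fin n) → Fin n) : Prop :=
  ∀ h, ValidHist n h → h.length < n → f h.length → ValidMove n h (s h)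

/-- Number of jumps made at turns satisfying `f` during the play `l`:
turn `k ≥ 1` is a jump if the slice taken is not adjacent to the one taken at turn `k-1`. -/
def jumpCount (n : ℕ) (f : ℕ → Bool) (l : List (Fin n)) : ℕ :=
  (((List.range (l.zip l.tail).length).zip (l.zip l.tail)).filter
    (fun p => f (p.1 + 1) && !(decide (adj n p.2.2 p.2.1)))).length

/-- Alice has a strategy making at most `j` jumps and guaranteeing her
slices of total size at least `g`. -/
def AliceJGain (n : ℕ) (P : Fin n → ℝ) (j : ℕ) (g : ℝ) : Prop :=
  ∃ s : List (Fin n) → Fin n, Legal n isAlice s ∧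
    ∀ l : List (Fin n), ValidHist n l → l.length = n → Consistent n isAlice s l →
      g ≤ aliceGain n P l ∧ jumpCount n isAlice l ≤ j

/-- Alice has a strategy guaranteeing her slices of total size at least `g`. -/
def AliceGain' (n : ℕ) (P : Fin n → ℝ) (g : ℝ) : Prop :=
  ∃ s : List (Fin n) → Fin n, Legal n isAlice s ∧
    ∀ l : List (Fin n), ValidHist n l → l.length = n → Consistent n isAlice s l →
      g ≤ aliceGain n P l

/-- Bob (moving second) has a strategy guaranteeing him slices of total size at least `g`. -/
def BobGain' (n : ℕ) (P : Fin n → ℝ) (g : ℝ) : Prop :=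
  ∃ s : List (Fin n) → Fin n, Legal n isBob s ∧
    ∀ l : List (Fin n), ValidHist n l → l.length = n → Consistent n isBob s l →
      g ≤ bobGain n P l

namespace PZ
open scoped Fin.NatCast Fin.CommRing
variable {n : ℕ} [NeZero n]

lemma mem_rz {α : Type*} {l : List α} {p : ℕ × α} (h : p ∈ (List.range l.length).zip l) :
    ∃ hlt : p.1 < l.length, l[p.1] = p.2 := by
  obtain ⟨i, hi, rfl⟩ := List.mem_iff_getElem.1 h
  simp only [List.length_zip, List.length_range, Nat.min_self] at hi
  simp [List.getElem_zip, List.getElem_range, hi]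

lemma rz_map_snd {α : Type*} (l : List α) : ((List.range l.length).zip l).map Prod.snd = l :=
  List.map_snd_zip (by simp)

lemma mod2 (he : Even n) (y : ℕ) : y % n % 2 = y % 2 := by
  obtain ⟨k, hk⟩ := he
  conv_rhs => rw [← Nat.div_add_mod y n]
  subst hk
  rw [show k + k = 2 * k by ring, Nat.mul_assoc]
  omega

lemma val_add_nat (a : Fin n) (t : ℕ) : (a + (t : Fin n)).1 = (a.1 + t) % n := by
  rw [Fin.add_def]
  simp only [Fin.val_natCast]
  conv_rhs => rw [Nat.add_mod a.1 t n, Nat.mod_eq_of_lt a.isLt]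

lemma parity_add_nat (he : Even n) (a : Fin n) (t : ℕ) :
    (a + (t : Fin n)).1 % 2 = (a.1 + t) % 2 := by
  rw [val_add_nat, mod2 he]

lemma natCast_inj {s t : ℕ} (hs : s < n) (ht : t < n) (h : (s : Fin n) = (t : Fin n)) :
    s = t := by
  have := congrArg Fin.val h
  rwa [Fin.val_natCast, Fin.val_natCast, Nat.mod_eq_of_lt hs, Nat.mod_eq_of_lt ht] at this

lemma add_nat_inj {a : Fin n} {s t : ℕ} (hs : s < n) (ht : t < n)
    (h : a + (s : Fin n) = a + (t : Fin n)) : s = t :=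
  natCast_inj hs ht (by exact add_left_cancel h)

lemma val_add_one (hn2 : 2 ≤ n) (x : Fin n) : (x + 1).1 = (x.1 + 1) % n := by
  rw [Fin.add_def, Fin.val_one' n, Nat.mod_eq_of_lt hn2]

lemma adj_iff (hn2 : 2 ≤ n) (i j : Fin n) : adj n i j ↔ (i + 1 = j ∨ j + 1 = i) := by
  constructor
  · rintro (h | h)
    · exact Or.inl (Fin.ext (by rw [val_add_one hn2]; exact h))
    · exact Or.inr (Fin.ext (by rw [val_add_one hn2]; exact h))
  · rintro (h | h)
    · exact Or.inl (by rw [← h, val_add_one hn2])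
    · exact Or.inr (by rw [← h, val_add_one hn2])

lemma adj_add_one (hn2 : 2 ≤ n) (b : Fin n) : adj n (b + 1) b :=
  (adj_iff hn2 _ _).2 (Or.inr rfl)

lemma adj_sub_one (hn2 : 2 ≤ n) (b : Fin n) : adj n (b - 1) b :=
  (adj_iff hn2 _ _).2 (Or.inl (by ring))

lemma sub_one_eq_add (hn2 : 2 ≤ n) (a : Fin n) : a - 1 = a + ((n - 1 : ℕ) : Fin n) := by
  have h1 : ((n - 1 : ℕ) : Fin n) = -1 := by
    have h2 : ((n - 1 : ℕ) : Fin n) + 1 = 0 := by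
      calc ((n - 1 : ℕ) : Fin n) + 1 = ((n - 1 + 1 : ℕ) : Fin n) := by push_cast; ring
      _ = ((n : ℕ) : Fin n) := by rw [Nat.sub_add_cancel (by omega)]
      _ = 0 := by simp
    linear_combination h2
  rw [h1]; ring

lemma parity_sub_one (he : Even n) (hn2 : 2 ≤ n) (a : Fin n) :
    (a - 1).1 % 2 = (a.1 + 1) % 2 := by
  rw [sub_one_eq_add hn2, parity_add_nat he]
  obtain ⟨k, hk⟩ := he
  omega


/-- Alice's shift strategy starting at `start`. -/
def str (start : Fin n) (h : List (Fin n)) : Fin n :=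
  if hb : h = [] then start
  else if h.getLast hb + 1 ∈ h then h.getLast hb - 1 else h.getLast hb + 1

lemma validHist_concat {h : List (Fin n)} {w : Fin n} (hv : ValidHist n (h ++ [w])) :
    ValidHist n h ∧ w ∉ h ∧ (h = [] ∨ ∃ x ∈ h, adj n w x) := by
  obtain ⟨hnd, hadj⟩ := hv
  rw [List.nodup_append] at hnd
  refine ⟨⟨hnd.1, ?_⟩, ?_, ?_⟩
  · intro k hk hk0
    obtain ⟨j, hj, hja⟩ := hadj k (by simp; omega) hk0
    refine ⟨j, hj, ?_⟩
    have e1 : (h ++ [w]).get ⟨k, by simp; omega⟩ = h.get ⟨k, hk⟩ := by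
      simp [List.getElem_append_left hk]
    have e2 : (h ++ [w]).get ⟨j, by simp; omega⟩ = h.get ⟨j, hj.trans hk⟩ := by
      simp [List.getElem_append_left (hj.trans hk)]
    rwa [e1, e2] at hja
  · intro hw
    exact hnd.2.2 w hw w (List.mem_singleton_self w) rfl
  · rcases List.eq_nil_or_concat' h with rfl | ⟨h', w', rfl⟩
    · exact Or.inl rfl
    · right
      have hm0 : 0 < (h' ++ [w']).length := by simp
      have hmlt : (h' ++ [w']).length < ((h' ++ [w']) ++ [w]).length := by simp
      obtain ⟨j, hj, hja⟩ := hadj (h' ++ [w']).length hmlt hm0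
      have e1 : ((h' ++ [w']) ++ [w]).get ⟨(h' ++ [w']).length, hmlt⟩ = w := by
        simp only [List.get_eq_getElem]
        rw [List.getElem_append_right (le_refl _)]
        simp
      have e2 : ((h' ++ [w']) ++ [w]).get ⟨j, hj.trans hmlt⟩
          = (h' ++ [w']).get ⟨j, hj⟩ := by
        simp only [List.get_eq_getElem]
        exact List.getElem_append_left hj
      rw [e1, e2] at hja
      exact ⟨_, List.get_mem _ _, hja⟩

lemma consistent_concat {f : ℕ → Bool} {s : List (Fin n) → Fin n} {h : List (Fin n)} {w : Fin n}
    (hc : Consistent n f s (h ++ [w])) :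
    Consistent n f s h ∧ (f h.length → w = s h) := by
  constructor
  · intro k hk hf
    have hk' : k < (h ++ [w]).length := by simp; omega
    have := hc k hk' hf
    have e1 : (h ++ [w]).get ⟨k, hk'⟩ = h.get ⟨k, hk⟩ := by
      simp [List.getElem_append_left hk]
    have e2 : (h ++ [w]).take k = h.take k := by
      rw [List.take_append, Nat.sub_eq_zero_of_le hk.le, List.take_zero,
        List.append_nil]
    rwa [e1, e2] at this
  · intro hf
    have hk' : h.length < (h ++ [w]).length := by simp
    have := hc h.length hk' hf
    have e1 : (h ++ [w]).get ⟨h.length, hk'⟩ = w := by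
      simp [List.getElem_append_right]
    have e2 : (h ++ [w]).take h.length = h := by
      rw [List.take_append, Nat.sub_self, List.take_zero, List.append_nil,
        List.take_length]
    rwa [e1, e2] at this

lemma ext_step (hn2 : 2 ≤ n) {h : List (Fin n)} {a : Fin n} {w : Fin n}
    (hmem : ∀ x : Fin n, x ∈ h ↔ ∃ t, t < h.length ∧ x = a + (t : Fin n))
    (hw : w ∉ h) {x : Fin n} (hx : x ∈ h) (haxw : adj n w x) :
    w = a - 1 ∨ w = a + ((h.length : ℕ) : Fin n) := by
  obtain ⟨t, ht, rfl⟩ := (hmem x).1 hx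
  rcases (adj_iff hn2 w _).1 haxw with h1 | h1
  · rcases Nat.eq_zero_or_pos t with rfl | htpos
    · left
      have : w = a + ((0:ℕ) : Fin n) - 1 := by linear_combination h1
      simpa using this
    · exfalso
      apply hw
      rw [hmem]
      refine ⟨t - 1, by omega, ?_⟩
      have ht' : ((t:ℕ) : Fin n) = ((t - 1 : ℕ) : Fin n) + 1 := by
        conv_lhs => rw [show t = (t - 1) + 1 by omega]
        push_cast
        ring
      rw [ht'] at h1
      linear_combination h1
  · rcases eq_or_lt_of_le (Nat.succ_le_of_lt ht) with he1 | hlt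
    · right
      rw [← h1, ← he1]
      push_cast
      ring
    · exfalso
      apply hw
      rw [hmem]
      exact ⟨t + 1, hlt, by rw [← h1]; push_cast; ring⟩

lemma arc_of_valid (hn2 : 2 ≤ n) :
    ∀ h : List (Fin n), ValidHist n h → ∀ (hne : h ≠ []), h.length ≤ n →
    ∃ a : Fin n,
      (∀ x : Fin n, x ∈ h ↔ ∃ t, t < h.length ∧ x = a + (t : Fin n)) ∧
      (h.getLast hne = a ∨ h.getLast hne = a + ((h.length - 1 : ℕ) : Fin n)) := by
  intro h
  induction h using List.reverseRecOn with
  | nil => intro _ hne _; exact absurd rfl hne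
  | append_singleton h w ih =>
    intro hv hne hlen
    obtain ⟨hv', hw, hadj⟩ := validHist_concat hv
    rcases eq_or_ne h [] with rfl | hne'
    · refine ⟨w, ?_, Or.inl List.getLast_concat⟩
      intro x
      simp only [List.nil_append, List.mem_singleton, List.length_cons, List.length_nil]
      constructor
      · rintro rfl; exact ⟨0, by omega, by simp⟩
      · rintro ⟨t, ht, rfl⟩
        have : t = 0 := by omega
        subst this; simp
    · have hlen' : h.length < n := by
        have : (h ++ [w]).length = h.length + 1 := by simp
        omega
      obtain ⟨a, hmem, hlast⟩ := ih hv' hne' hlen'.le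
      obtain ⟨x, hx, haxw⟩ := hadj.resolve_left hne'
      have hlen2 : (h ++ [w]).length = h.length + 1 := by simp
      rcases ext_step hn2 hmem hw hx haxw with hw1 | hw1
      · refine ⟨a - 1, ?_, Or.inl (by rw [List.getLast_concat, hw1])⟩
        intro y
        rw [List.mem_append, hmem, hlen2, List.mem_singleton]
        constructor
        · rintro (⟨t, ht, rfl⟩ | rfl)
          · exact ⟨t + 1, by omega, by push_cast; ring⟩
          · exact ⟨0, by omega, by rw [hw1]; simp⟩
        · rintro ⟨t, ht, rfl⟩
          rcases Nat.eq_zero_or_pos t with rfl | htpos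
          · right; rw [hw1]; simp
          · left
            refine ⟨t - 1, by omega, ?_⟩
            conv_lhs => rw [show t = (t - 1) + 1 by omega]
            push_cast
            ring
      · refine ⟨a, ?_, Or.inr ?_⟩
        · intro y
          rw [List.mem_append, hmem, hlen2, List.mem_singleton]
          constructor
          · rintro (⟨t, ht, rfl⟩ | rfl)
            · exact ⟨t, by omega, rfl⟩
            · exact ⟨h.length, by omega, hw1⟩
          · rintro ⟨t, ht, rfl⟩
            rcases eq_or_lt_of_le (Nat.lt_succ_iff.1 ht) with he1 | hlt
            · right; rw [hw1, he1]
            · left; exact ⟨t, hlt, rfl⟩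
        · have e : ((h ++ [w]).length - 1 : ℕ) = h.length := by simp
          rw [e, List.getLast_concat]
          exact hw1

lemma str_legal (hn2 : 2 ≤ n) (start : Fin n) : Legal n isAlice (str start) := by
  intro h hv hlen _
  by_cases hb : h = []
  · subst hb
    refine ⟨List.not_mem_nil, Or.inl rfl⟩
  · obtain ⟨a, hmem, hlast⟩ := arc_of_valid hn2 h hv hb hlen.le
    have hm1 : 1 ≤ h.length := List.length_pos_iff.2 hb
    have hbmem : h.getLast hb ∈ h := List.getLast_mem hb
    have hstr : str start h = if h.getLast hb + 1 ∈ h then h.getLast hb - 1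
        else h.getLast hb + 1 := by rw [str, dif_neg hb]
    by_cases hb1 : h.getLast hb + 1 ∈ h
    · rw [hstr, if_pos hb1]
      refine ⟨?_, Or.inr ⟨_, hbmem, adj_sub_one hn2 _⟩⟩
      rcases hlast with hba | hba
      · intro hcon
        rw [hba, sub_one_eq_add hn2, hmem] at hcon
        obtain ⟨t, ht, hteq⟩ := hcon
        have := add_nat_inj (t := n - 1) (by omega) (by omega) hteq.symm
        omega
      · exfalso
        have hcast : a + ((h.length - 1 : ℕ) : Fin n) + 1 = a + ((h.length : ℕ) : Fin n) := by
          conv_rhs => rw [show h.length = (h.length - 1) + 1 by omega]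
          push_cast
          ring
        rw [hba, hcast, hmem] at hb1
        obtain ⟨t, ht, hteq⟩ := hb1
        have := add_nat_inj (s := h.length) hlen (by omega) hteq
        omega
    · rw [hstr, if_neg hb1]
      exact ⟨hb1, Or.inr ⟨_, hbmem, adj_add_one hn2 _⟩⟩

lemma colors (he : Even n) (hn2 : 2 ≤ n) (start : Fin n) :
    ∀ h : List (Fin n), ValidHist n h → Consistent n isAlice (str start) h → h.length ≤ n →
    ∀ k (hk : k < h.length), (h.get ⟨k, hk⟩).1 % 2 = (start.1 + k) % 2 := by
  intro h
  induction h using List.reverseRecOn with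
  | nil => intro _ _ _ k hk; simp at hk
  | append_singleton h w ih =>
    intro hv hc hlen k hk
    obtain ⟨hv', hw, hadj⟩ := validHist_concat hv
    obtain ⟨hc', hcw⟩ := consistent_concat hc
    have hlen2 : (h ++ [w]).length = h.length + 1 := by simp
    rw [hlen2] at hlen hk
    rcases Nat.lt_or_ge k h.length with hkm | hkm
    · have e : (h ++ [w]).get ⟨k, by omega⟩ = h.get ⟨k, hkm⟩ := by
        simp only [List.get_eq_getElem]
        exact List.getElem_append_left hkm
      rw [e]
      exact ih hv' hc' (by omega) k hkm
    · have hkem : k = h.length := by omega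
      subst hkem
      have e : (h ++ [w]).get ⟨h.length, by omega⟩ = w := by
        simp only [List.get_eq_getElem]
        rw [List.getElem_append_right (le_refl _)]
        simp
      rw [e]
      rcases eq_or_ne h [] with rfl | hne'
      · have hwdef : w = str start [] := hcw rfl
        rw [hwdef]
        simp [str]
      · have hm1 : 1 ≤ h.length := List.length_pos_iff.2 hne'
        have hlenlt : h.length < n := by omega
        obtain ⟨a, hmem, hlast⟩ := arc_of_valid hn2 h hv' hne' hlenlt.le
        have hlastcol : (h.getLast hne').1 % 2 = (start.1 + (h.length - 1)) % 2 := by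
          have := ih hv' hc' hlenlt.le (h.length - 1) (by omega)
          rw [List.getLast_eq_getElem]
          simpa using this
        rcases Nat.even_or_odd h.length with hpar | hpar
        · -- Alice's move
          have hwdef : w = str start h := hcw (by simp [isAlice, Nat.even_iff.mp hpar])
          have hstr : str start h = if h.getLast hne' + 1 ∈ h then h.getLast hne' - 1
              else h.getLast hne' + 1 := by rw [str, dif_neg hne']
          rcases hlast with hba | hba
          · have hm2 : 2 ≤ h.length := by
              rcases hpar with ⟨c, hc2⟩
              omega
            have hbin : h.getLast hne' + 1 ∈ h := by
              rw [hba, hmem]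
              exact ⟨1, by omega, by norm_num⟩
            rw [hwdef, hstr, if_pos hbin, hba, parity_sub_one he hn2]
            have hacol : a.1 % 2 = (start.1 + (h.length - 1)) % 2 := hba ▸ hlastcol
            omega
          · have hcast : a + ((h.length - 1 : ℕ) : Fin n) + 1 = a + ((h.length : ℕ) : Fin n) := by
              conv_rhs => rw [show h.length = (h.length - 1) + 1 by omega]
              push_cast
              ring
            have hbnin : h.getLast hne' + 1 ∉ h := by
              intro hcon
              rw [hba, hcast, hmem] at hcon
              obtain ⟨t, ht, hteq⟩ := hcon
              have := add_nat_inj (s := h.length) hlenlt (by omega) hteq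
              omega
            rw [hwdef, hstr, if_neg hbnin, hba, hcast, parity_add_nat he]
            have hacol : (a.1 + (h.length - 1)) % 2 = (start.1 + (h.length - 1)) % 2 := by
              have h2 := hlastcol
              rw [hba, parity_add_nat he] at h2
              exact h2
            omega
        · -- Bob's move
          obtain ⟨x, hx, haxw⟩ := hadj.resolve_left hne'
          have hacol : a.1 % 2 = start.1 % 2 := by
            have hev : (h.length - 1) % 2 = 0 := by
              rcases hpar with ⟨c, hc2⟩
              omega
            rcases hlast with hba | hba
            · have := hba ▸ hlastcol
              omega
            · have h2 := hlastcol
              rw [hba, parity_add_nat he] at h2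
              omega
          rcases ext_step hn2 hmem hw hx haxw with hw1 | hw1
          · rw [hw1, parity_sub_one he hn2]
            rcases hpar with ⟨c, hc2⟩
            omega
          · rw [hw1, parity_add_nat he]
            rcases hpar with ⟨c, hc2⟩
            omega

end PZ
/-- for an even number of slices Alice has a (zero-jump, i.e. shifts-only
after her first turn) strategy guaranteeing her at least half of the pizza. -/
theorem alice_half_of_even_cutting (n : ℕ) (hn : 0 < n) (he : Even n)
    (P : Fin n → ℝ) (hP : ∀ i, 0 ≤ P i) :
    AliceJGain n P 0 ((∑ i, P i) / 2) := by
  classical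
  haveI : NeZero n := ⟨hn.ne'⟩
  have hn2 : 2 ≤ n := by
    obtain ⟨k, hk⟩ := he
    omega
  set S0 := ∑ i ∈ Finset.univ.filter (fun i : Fin n => i.1 % 2 = 0), P i with hS0
  set S1 := ∑ i ∈ Finset.univ.filter (fun i : Fin n => i.1 % 2 = 1), P i with hS1
  set start : Fin n := if S1 ≤ S0 then ⟨0, by omega⟩ else ⟨1, by omega⟩ with hstartdef
  set red := Finset.univ.filter (fun i : Fin n => i.1 % 2 = start.1 % 2) with hred
  set blue := Finset.univ.filter (fun i : Fin n => ¬ i.1 % 2 = start.1 % 2) with hblue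
  have hrb : ∑ i ∈ red, P i + ∑ i ∈ blue, P i = ∑ i, P i :=
    Finset.sum_filter_add_sum_filter_not _ _ _
  have hble : ∑ i ∈ blue, P i ≤ ∑ i ∈ red, P i := by
    by_cases hif : S1 ≤ S0
    · have hs : start.1 = 0 := by rw [hstartdef, if_pos hif]
      have hredeq : red = Finset.univ.filter (fun i : Fin n => i.1 % 2 = 0) := by
        rw [hred]
        apply Finset.filter_congr
        intro i _
        simp [hs]
      have hblueeq : blue = Finset.univ.filter (fun i : Fin n => i.1 % 2 = 1) := by
        rw [hblue]
        apply Finset.filter_congr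
        intro i _
        simp [hs]
      rw [hredeq, hblueeq]
      exact hif
    · have hs : start.1 = 1 := by rw [hstartdef, if_neg hif]
      have hredeq : red = Finset.univ.filter (fun i : Fin n => i.1 % 2 = 1) := by
        rw [hred]
        apply Finset.filter_congr
        intro i _
        simp [hs]
      have hblueeq : blue = Finset.univ.filter (fun i : Fin n => i.1 % 2 = 0) := by
        rw [hblue]
        apply Finset.filter_congr
        intro i _
        simp [hs]
      rw [hredeq, hblueeq]
      push_neg at hif
      exact hif.le
  refine ⟨PZ.str start, PZ.str_legal hn2 start, ?_⟩
  intro l hv hlN hc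
  have hcol : ∀ k (hk : k < l.length), (l.get ⟨k, hk⟩).1 % 2 = (start.1 + k) % 2 :=
    PZ.colors he hn2 start l hv hc (by omega)
  constructor
  · -- the gain bound
    have htoteq : l.toFinset = Finset.univ := by
      apply Finset.eq_univ_of_card
      rw [List.toFinset_card_of_nodup hv.1]
      simp [hlN]
    have htot : (l.map P).sum = ∑ i, P i := by
      calc (l.map P).sum = l.toFinset.sum P := (List.sum_toFinset P hv.1).symm
      _ = ∑ i, P i := by rw [htoteq]
    have hsplit : aliceGain n P l + bobGain n P l = (l.map P).sum := by
      unfold aliceGain bobGain gainOn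
      have hBA : (fun p : ℕ × Fin n => isBob p.1) = (fun p : ℕ × Fin n => !(isAlice p.1)) := by
        funext p
        rcases Nat.mod_two_eq_zero_or_one p.1 with h2 | h2 <;> simp [isAlice, isBob, h2]
      have hperm : List.Perm
          ((((List.range l.length).zip l).filter (fun p => isAlice p.1)) ++ (((List.range l.length).zip l).filter (fun p => isBob p.1)))
          ((List.range l.length).zip l) := by
        rw [hBA]
        exact List.filter_append_perm _ _
      have hs := (hperm.map (fun p : ℕ × Fin n => P p.2)).sum_eq
      rw [List.map_append, List.sum_append] at hs
      rw [hs, show (fun p : ℕ × Fin n => P p.2) = P ∘ Prod.snd from rfl, ← List.map_map,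
        PZ.rz_map_snd]
    set bobL := (((List.range l.length).zip l).filter (fun p => isBob p.1)).map Prod.snd with hbL
    have hbg : bobGain n P l = (bobL.map P).sum := by
      unfold bobGain gainOn
      rw [hbL, List.map_map]
      rfl
    have hbnd : bobL.Nodup := by
      have h1 : bobL.Sublist (((List.range l.length).zip l).map Prod.snd) := (List.filter_sublist).map _
      rw [PZ.rz_map_snd] at h1
      exact hv.1.sublist h1
    have hbluemem : ∀ x ∈ bobL, ¬ x.1 % 2 = start.1 % 2 := by
      intro x hx
      rw [hbL, List.mem_map] at hx
      obtain ⟨p, hp, rfl⟩ := hx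
      rw [List.mem_filter] at hp
      obtain ⟨hpe, hpb⟩ := hp
      obtain ⟨hlt, hget⟩ := PZ.mem_rz hpe
      have hcv := hcol p.1 hlt
      rw [List.get_eq_getElem, hget] at hcv
      have hodd : p.1 % 2 = 1 := by
        have := hpb
        simp [isBob] at this
        exact this
      omega
    have hbb : (bobL.map P).sum ≤ ∑ i ∈ blue, P i := by
      rw [← List.sum_toFinset P hbnd]
      apply Finset.sum_le_sum_of_subset_of_nonneg
      · intro x hx
        rw [List.mem_toFinset] at hx
        rw [hblue, Finset.mem_filter]
        exact ⟨Finset.mem_univ x, hbluemem x hx⟩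
      · intro i _ _
        exact hP i
    have : bobGain n P l ≤ ∑ i ∈ blue, P i := by rw [hbg]; exact hbb
    linarith
  · -- jump count
    have hfe : (((List.range (l.zip l.tail).length).zip (l.zip l.tail)).filter
        (fun p => isAlice (p.1 + 1) && !(decide (adj n p.2.2 p.2.1)))) = [] := by
      rw [List.filter_eq_nil_iff]
      rintro ⟨k, u, v⟩ hp
      obtain ⟨hlt, hget⟩ := PZ.mem_rz hp
      have hlt' : k + 1 < l.length := by
        rw [List.length_zip, List.length_tail] at hlt
        omega
      rw [List.getElem_zip, List.getElem_tail] at hget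
      have hu : l[k]'(by omega) = u := congrArg Prod.fst hget
      have hv2 : l[k + 1]'hlt' = v := congrArg Prod.snd hget
      by_cases hA : isAlice (k + 1) = true
      · suffices hadj : adj n v u by simp [hA, hadj]
        have hcons := hc (k + 1) hlt' hA
        set h0 := l.take (k + 1) with hh0
        have hlen0 : h0.length = k + 1 := by
          rw [hh0, List.length_take]
          omega
        have hne : h0 ≠ [] := List.ne_nil_of_length_pos (by omega)
        have hlast : h0.getLast hne = u := by
          rw [List.getLast_eq_getElem]
          have e1 : h0[h0.length - 1]'(by omega) = h0[k]'(by omega) := by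
            congr 1
            omega
          have e2 : h0[k]'(by omega) = l[k]'(by omega) := List.getElem_take
          rw [e1, e2, hu]
        have hgv : v = PZ.str start h0 := by
          rw [← hv2, ← hcons]
          simp
        have hstr : PZ.str start h0 = if h0.getLast hne + 1 ∈ h0 then h0.getLast hne - 1
            else h0.getLast hne + 1 := by rw [PZ.str, dif_neg hne]
        rw [hgv, hstr, hlast]
        by_cases hin : u + 1 ∈ h0
        · rw [if_pos hin]
          exact PZ.adj_sub_one hn2 u
        · rw [if_neg hin]
          exact PZ.adj_add_one hn2 u
      · simp [hA]
    unfold jumpCount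
    rw [hfe]
    exact le_refl 0
end

section
/- Let n be odd and V a circular sequence of n nonnegative reals. Every half-circle of minimum size lies in at least one minimal covering triple of half-circles: there exist three half-circles, one of minimum size, each of size at most the potential p(V) of V, which together cover all elements of V, and such that no half-circle in the triple can be replaced by a half-circle of strictly smaller size while keeping the covering property. -/
open Fin.NatCast
/-- The arc of `l` consecutive elements of the circular sequence on `Fin n`
starting at `s`. -/
def arcSet (n : ℕ) [NeZero n] (s : Fin n) (l : ℕ) : Finset (Fin n) :=
  (Finset.range l).image (fun k : ℕ => s + (k : Fin n))

/-- The size (total weight) of the arc of length `l` starting at `s`. -/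
def arcSum (n : ℕ) [NeZero n] (V : Fin n → ℝ) (s : Fin n) (l : ℕ) : ℝ :=
  ∑ k ∈ Finset.range l, V (s + (k : Fin n))

/-- Length of a half-circle: `(n+1)/2`. -/
def hcLen (n : ℕ) : ℕ := (n + 1) / 2

/-- The half-circle (arc of `(n+1)/2` consecutive elements) starting at `s`. -/
def hcSet (n : ℕ) [NeZero n] (s : Fin n) : Finset (Fin n) := arcSet n s (hcLen n)

/-- The size of the half-circle starting at `s`. -/
def hcSum (n : ℕ) [NeZero n] (V : Fin n → ℝ) (s : Fin n) : ℝ := arcSum n V s (hcLen n)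

/-- The potential of an element `v`: the minimum size of a half-circle covering `v`. -/
noncomputable def pot (n : ℕ) [NeZero n] (V : Fin n → ℝ) (v : Fin n) : ℝ :=
  sInf {x : ℝ | ∃ s : Fin n, v ∈ hcSet n s ∧ x = hcSum n V s}

/-- The potential `p(V)` of the circular sequence: the maximum potential of an element. -/
noncomputable def potV (n : ℕ) [NeZero n] (V : Fin n → ℝ) : ℝ :=
  sSup {x : ℝ | ∃ v : Fin n, x = pot n V v}

/-- A minimal covering triple of half-circles: the three half-circles cover everything,
`s1` has minimum size among all half-circles, all three have size at most `p(V)`, and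
none of them can be replaced by a half-circle of strictly smaller size keeping the
covering property. -/
def MinTriple (n : ℕ) [NeZero n] (V : Fin n → ℝ) (s1 s2 s3 : Fin n) : Prop :=
  hcSet n s1 ∪ hcSet n s2 ∪ hcSet n s3 = Finset.univ ∧
  (∀ t, hcSum n V s1 ≤ hcSum n V t) ∧
  hcSum n V s1 ≤ potV n V ∧ hcSum n V s2 ≤ potV n V ∧ hcSum n V s3 ≤ potV n V ∧
  (∀ t, hcSet n t ∪ hcSet n s2 ∪ hcSet n s3 = Finset.univ → hcSum n V s1 ≤ hcSum n V t) ∧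
  (∀ t, hcSet n s1 ∪ hcSet n t ∪ hcSet n s3 = Finset.univ → hcSum n V s2 ≤ hcSum n V t) ∧
  (∀ t, hcSet n s1 ∪ hcSet n s2 ∪ hcSet n t = Finset.univ → hcSum n V s3 ≤ hcSum n V t)

/-- The partition of the circular sequence into six consecutive arcs `A,…,F`
(of lengths `lA,…,lF`, starting at `s0`) such that the half-circles of the triple
`(s1,s2,s3)` are `ABC`, `CDE` and `EFA`. -/
def TriplePartition (n : ℕ) [NeZero n] (s1 s2 s3 s0 : Fin n)
    (lA lB lC lD lE lF : ℕ) : Prop :=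
  lA + lB + lC + lD + lE + lF = n ∧
  lA = lD + 1 ∧ lC = lF + 1 ∧ lE = lB + 1 ∧ 2 ≤ lA ∧ 2 ≤ lC ∧ 2 ≤ lE ∧
  hcSet n s1 = arcSet n s0 (lA + lB + lC) ∧
  hcSet n s2 = arcSet n (s0 + ((lA + lB : ℕ) : Fin n)) (lC + lD + lE) ∧
  hcSet n s3 = arcSet n (s0 + ((lA + lB + lC + lD : ℕ) : Fin n)) (lE + lF + lA)

section AuxMinTriple

open Finset

variable {n : ℕ} [NeZero n]

lemma mem_hcSet_iff' (s x : Fin n) :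
    x ∈ hcSet n s ↔ ∃ k, k < hcLen n ∧ x = s + (k : Fin n) := by
  simp [hcSet, arcSet, eq_comm]

lemma hcLen_pos' : 0 < hcLen n := by
  have := NeZero.pos n; simp only [hcLen]; omega

lemma self_mem_hcSet' (s : Fin n) : s ∈ hcSet n s := by
  rw [mem_hcSet_iff']
  exact ⟨0, hcLen_pos', by simp⟩

/-- The potential of `v` is attained by a half-circle containing `v`. -/
lemma pot_attained' (V : Fin n → ℝ) (v : Fin n) :
    ∃ s : Fin n, v ∈ hcSet n s ∧ pot n V v = hcSum n V s := by
  have hsub : {x : ℝ | ∃ s : Fin n, v ∈ hcSet n s ∧ x = hcSum n V s} ⊆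
      Set.range (hcSum n V) := by
    rintro x ⟨s, -, rfl⟩; exact ⟨s, rfl⟩
  have hfin : {x : ℝ | ∃ s : Fin n, v ∈ hcSet n s ∧ x = hcSum n V s}.Finite :=
    (Set.finite_range _).subset hsub
  have hne : {x : ℝ | ∃ s : Fin n, v ∈ hcSet n s ∧ x = hcSum n V s}.Nonempty :=
    ⟨hcSum n V v, v, self_mem_hcSet' v, rfl⟩
  have := hne.csInf_mem hfin
  obtain ⟨s, hs, hx⟩ := this
  exact ⟨s, hs, hx⟩

lemma pot_le_potV' (V : Fin n → ℝ) (v : Fin n) : pot n V v ≤ potV n V := by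
  have hsub : {x : ℝ | ∃ v : Fin n, x = pot n V v} ⊆ Set.range (pot n V) := by
    rintro x ⟨w, rfl⟩; exact ⟨w, rfl⟩
  have hfin : {x : ℝ | ∃ v : Fin n, x = pot n V v}.Finite :=
    (Set.finite_range _).subset hsub
  exact le_csSup hfin.bddAbove ⟨v, rfl⟩

lemma min_le_pot' (V : Fin n → ℝ) (s1 : Fin n) (hmin : ∀ t, hcSum n V s1 ≤ hcSum n V t)
    (v : Fin n) : hcSum n V s1 ≤ pot n V v := by
  have hne : {x : ℝ | ∃ s : Fin n, v ∈ hcSet n s ∧ x = hcSum n V s}.Nonempty :=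
    ⟨hcSum n V v, v, self_mem_hcSet' v, rfl⟩
  exact le_csInf hne (by rintro x ⟨s, -, rfl⟩; exact hmin s)

/-- A half-circle containing `u + d` covers either all of `[u, u+d]`
or all of `[u+d, u+(hcLen n - 2)]`. -/
lemma cover_cases' (u t : Fin n) (d : ℕ) (hm : u + (d : Fin n) ∈ hcSet n t) :
    (∀ e ≤ d, u + (e : Fin n) ∈ hcSet n t) ∨
    (∀ e, d ≤ e → e + 2 ≤ hcLen n → u + (e : Fin n) ∈ hcSet n t) := by
  obtain ⟨j, hj, hje⟩ := (mem_hcSet_iff' t _).1 hm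
  by_cases hjd : d ≤ j
  · left; intro e he
    have key : u = t + ((j - d : ℕ) : Fin n) := by
      have h1 : u + (d : Fin n) = t + ((j - d : ℕ) : Fin n) + (d : Fin n) := by
        rw [hje, add_assoc, ← Nat.cast_add]
        congr 2; omega
      exact add_right_cancel h1
    rw [mem_hcSet_iff']
    exact ⟨j - d + e, by omega, by rw [key, add_assoc, ← Nat.cast_add]⟩
  · right; intro e hde heh
    have key : t = u + ((d - j : ℕ) : Fin n) := by
      have h1 : u + ((d - j : ℕ) : Fin n) + (j : Fin n) = t + (j : Fin n) := by
        rw [← hje, add_assoc, ← Nat.cast_add]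
        congr 2; omega
      exact (add_right_cancel h1).symm
    rw [mem_hcSet_iff']
    refine ⟨e - (d - j), by omega, ?_⟩
    rw [key, add_assoc, ← Nat.cast_add]
    congr 2; omega

lemma two_hcLen (hn : Odd n) : 2 * hcLen n = n + 1 := by
  obtain ⟨m, hm⟩ := hn; simp only [hcLen, hm]; omega

/-- If the arc after `hcSet s1` is covered by `t2 ∪ t3`, the three half-circles cover
everything. -/
lemma cover_of' (hn : Odd n) (s1 t2 t3 : Fin n)
    (hcov : ∀ e, e + 2 ≤ hcLen n →
      s1 + (hcLen n : Fin n) + (e : Fin n) ∈ hcSet n t2 ∪ hcSet n t3) :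
    hcSet n s1 ∪ hcSet n t2 ∪ hcSet n t3 = Finset.univ := by
  have h2h := two_hcLen hn
  ext x
  simp only [Finset.mem_union, Finset.mem_univ, iff_true]
  set k : ℕ := (x - s1).val with hk
  have hklt : k < n := (x - s1).is_lt
  have hx : x = s1 + (k : Fin n) := by
    rw [hk, Fin.cast_val_eq_self]
    rw [add_comm, sub_add_cancel]
  by_cases hkh : k < hcLen n
  · exact Or.inl (Or.inl ((mem_hcSet_iff' s1 x).2 ⟨k, hkh, hx⟩))
  · have he2 : (k - hcLen n) + 2 ≤ hcLen n := by omega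
    have := hcov (k - hcLen n) he2
    have hxe : x = s1 + (hcLen n : Fin n) + ((k - hcLen n : ℕ) : Fin n) := by
      rw [hx, add_assoc, ← Nat.cast_add]
      congr 2; omega
    rw [← hxe] at this
    rcases Finset.mem_union.1 this with h | h
    · exact Or.inl (Or.inr h)
    · exact Or.inr h

/-- Claim A: there is a pair of half-circles of size at most `potV` covering,
together with `s1`, the whole circle. -/
lemma claimA' (hn : Odd n) (V : Fin n → ℝ) (s1 : Fin n) :
    ∃ t2 t3 : Fin n, hcSum n V t2 ≤ potV n V ∧ hcSum n V t3 ≤ potV n V ∧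
      hcSet n s1 ∪ hcSet n t2 ∪ hcSet n t3 = Finset.univ := by
  classical
  set u : Fin n := s1 + (hcLen n : Fin n) with hu
  by_cases h2 : 2 ≤ hcLen n
  · -- the set of prefix lengths coverable by a single cheap half-circle
    set S : Finset ℕ := (Finset.range (hcLen n - 1)).filter
      (fun d => ∃ t : Fin n, hcSum n V t ≤ potV n V ∧
        ∀ e ≤ d, u + (e : Fin n) ∈ hcSet n t) with hS
    have h0S : 0 ∈ S := by
      obtain ⟨t0, ht0m, ht0s⟩ := pot_attained' V u
      refine Finset.mem_filter.2 ⟨Finset.mem_range.2 (by omega), t0, ?_, ?_⟩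
      · rw [← ht0s]; exact pot_le_potV' V u
      · intro e he
        have : e = 0 := Nat.le_zero.1 he
        subst this; simpa using ht0m
    have hSne : S.Nonempty := ⟨0, h0S⟩
    set d : ℕ := S.max' hSne with hd
    obtain ⟨hdR, t2, ht2V, ht2c⟩ := Finset.mem_filter.1 (S.max'_mem hSne)
    rw [Finset.mem_range] at hdR
    by_cases hdtop : d + 3 ≤ hcLen n
    · -- d < hcLen n - 2 : use a half-circle attaining the potential of u + (d+1)
      obtain ⟨t3, ht3m, ht3s⟩ := pot_attained' V (u + ((d + 1 : ℕ) : Fin n))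
      have ht3V : hcSum n V t3 ≤ potV n V := by
        rw [← ht3s]; exact pot_le_potV' V _
      rcases cover_cases' u t3 (d + 1) ht3m with hL | hR
      · -- contradiction with maximality of d
        exfalso
        have : d + 1 ∈ S := Finset.mem_filter.2
          ⟨Finset.mem_range.2 (by omega), t3, ht3V, hL⟩
        have := S.le_max' _ this
        omega
      · refine ⟨t2, t3, ht2V, ht3V, cover_of' hn s1 t2 t3 ?_⟩
        intro e he
        by_cases hed : e ≤ d
        · exact Finset.mem_union.2 (Or.inl (ht2c e hed))
        · exact Finset.mem_union.2 (Or.inr (hR e (by omega) he))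
    · -- d = hcLen n - 2 : t2 covers the whole complement
      refine ⟨t2, t2, ht2V, ht2V, cover_of' hn s1 t2 t2 ?_⟩
      intro e he
      exact Finset.mem_union.2 (Or.inl (ht2c e (by omega)))
  · -- hcLen n < 2, i.e. n = 1 : the half-circle s1 already covers everything
    obtain ⟨t0, ht0m, ht0s⟩ := pot_attained' V u
    refine ⟨t0, t0, ?_, ?_, cover_of' hn s1 t0 t0 (fun e he => by omega)⟩ <;>
      (rw [← ht0s]; exact pot_le_potV' V u)

end AuxMinTriple
/-- every half-circle of minimum size lies in a minimal covering triple. -/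
theorem min_halfcircle_in_minimal_triple (n : ℕ) (hn : Odd n) [NeZero n]
    (V : Fin n → ℝ) (hV : ∀ i, 0 ≤ V i)
    (s1 : Fin n) (hmin : ∀ t, hcSum n V s1 ≤ hcSum n V t) :
    ∃ s2 s3 : Fin n, MinTriple n V s1 s2 s3 := by
  classical
  obtain ⟨t2, t3, ht2, ht3, hcov⟩ := claimA' hn V s1
  set P : Finset (Fin n × Fin n) := Finset.univ.filter
    (fun p => hcSet n s1 ∪ hcSet n p.1 ∪ hcSet n p.2 = Finset.univ ∧
      hcSum n V p.1 ≤ potV n V ∧ hcSum n V p.2 ≤ potV n V) with hP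
  have hPne : P.Nonempty :=
    ⟨(t2, t3), Finset.mem_filter.2 ⟨Finset.mem_univ _, hcov, ht2, ht3⟩⟩
  obtain ⟨p, hpP, hpmin⟩ :=
    P.exists_min_image (fun p => hcSum n V p.1 + hcSum n V p.2) hPne
  obtain ⟨-, hpcov, hp1, hp2⟩ := Finset.mem_filter.1 hpP
  refine ⟨p.1, p.2, hpcov, hmin, ?_, hp1, hp2, fun t _ => hmin t, ?_, ?_⟩
  · exact le_trans (min_le_pot' V s1 hmin s1) (pot_le_potV' V s1)
  · intro t hcovt
    by_contra hlt
    push_neg at hlt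
    have htP : (t, p.2) ∈ P := Finset.mem_filter.2
      ⟨Finset.mem_univ _, hcovt, le_trans hlt.le hp1, hp2⟩
    have := hpmin _ htP
    simp only at this
    linarith
  · intro t hcovt
    by_contra hlt
    push_neg at hlt
    have htP : (p.1, t) ∈ P := Finset.mem_filter.2
      ⟨Finset.mem_univ _, hcovt, hp1, le_trans hlt.le hp2⟩
    have := hpmin _ htP
    simp only at this
    linarith
end

section
/- Let nonnegative reals a, b, c, d, e, f satisfy a+b+c ≤ c+d+e ≤ e+f+a, and set g_1 = e+f+a, g_2 = b/2 + e/4 + c + d, g_3 = f/2 + c/4 + a + b, and P = a+b+c+d+e+f. Then max{g_1, g_2, g_3} ≥ (3g_1 + 4g_2 + 2g_3)/9 = (4P + a + c/2)/9 ≥ 4P/9. -/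
/-- the arithmetic behind the `4/9` lower bound. -/
theorem two_jump_arithmetic (a b c d e f : ℝ)
    (ha : 0 ≤ a) (hb : 0 ≤ b) (hc : 0 ≤ c) (hd : 0 ≤ d) (he : 0 ≤ e) (hf : 0 ≤ f)
    (h1 : a + b + c ≤ c + d + e) (h2 : c + d + e ≤ e + f + a) :
    (3 * (e + f + a) + 4 * (b/2 + e/4 + c + d) + 2 * (f/2 + c/4 + a + b)) / 9
      ≤ max (e + f + a) (max (b/2 + e/4 + c + d) (f/2 + c/4 + a + b)) ∧
    (3 * (e + f + a) + 4 * (b/2 + e/4 + c + d) + 2 * (f/2 + c/4 + a + b)) / 9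
      = (4 * (a + b + c + d + e + f) + a + c/2) / 9 ∧
    4 * (a + b + c + d + e + f) / 9 ≤ (4 * (a + b + c + d + e + f) + a + c/2) / 9 := by
  refine ⟨?_, by ring, by linarith⟩
  have m1 : e + f + a ≤ max (e + f + a) (max (b/2 + e/4 + c + d) (f/2 + c/4 + a + b)) :=
    le_max_left _ _
  have m2 : b/2 + e/4 + c + d ≤ max (e + f + a) (max (b/2 + e/4 + c + d) (f/2 + c/4 + a + b)) :=
    le_trans (le_max_left _ _) (le_max_right _ _)
  have m3 : f/2 + c/4 + a + b ≤ max (e + f + a) (max (b/2 + e/4 + c + d) (f/2 + c/4 + a + b)) :=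
    le_trans (le_max_right _ _) (le_max_right _ _)
  linarith
end

section
/- Let n be odd, V a circular sequence of n nonnegative reals with p(V) < |V|/2, partitioned into arcs A,B,C,D,E,F by a minimal triple (half-circles ABC, CDE, EFA). Form the circular sequence V' of length l(B)+l(E) by concatenating B and E. Then E is a half-circle of V' of minimum size among all half-circles of V'. -/
open Fin.NatCast

lemma cast_base (n : ℕ) [NeZero n] (s : Fin n) (a b c : ℕ) (h : a + b = c) :
    s + ((a : ℕ) : Fin n) + ((b : ℕ) : Fin n) = s + ((c : ℕ) : Fin n) := by
  rw [add_assoc, ← Nat.cast_add, h]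

lemma cast_base_wrap (n : ℕ) [NeZero n] (s : Fin n) (a b c : ℕ) (h : a + b = n + c) :
    s + ((a : ℕ) : Fin n) + ((b : ℕ) : Fin n) = s + ((c : ℕ) : Fin n) := by
  rw [add_assoc, ← Nat.cast_add, h, Nat.cast_add, Fin.natCast_self, zero_add]

lemma arcSum_add (n : ℕ) [NeZero n] (V : Fin n → ℝ) (s : Fin n) (a b : ℕ) :
    arcSum n V s (a + b) = arcSum n V s a + arcSum n V (s + (a : Fin n)) b := by
  unfold arcSum
  rw [Finset.sum_range_add]
  congr 1
  refine Finset.sum_congr rfl fun k _ => ?_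
  congr 1
  push_cast
  abel

lemma arcSet_mono (n : ℕ) [NeZero n] (s : Fin n) {a b : ℕ} (h : a ≤ b) :
    arcSet n s a ⊆ arcSet n s b :=
  Finset.image_subset_image (Finset.range_subset_range.mpr h)

lemma arcSet_shift_subset (n : ℕ) [NeZero n] (s : Fin n) (a b : ℕ) :
    arcSet n (s + (a : Fin n)) b ⊆ arcSet n s (a + b) := by
  intro x hx
  simp only [arcSet, Finset.mem_image, Finset.mem_range] at hx ⊢
  obtain ⟨k, hk, rfl⟩ := hx
  exact ⟨a + k, by omega, by push_cast; abel⟩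

lemma arcSet_full (n : ℕ) [NeZero n] (s : Fin n) : arcSet n s n = Finset.univ := by
  apply Finset.eq_univ_of_forall
  intro x
  simp only [arcSet, Finset.mem_image, Finset.mem_range]
  refine ⟨(x - s).val, (x - s).isLt, ?_⟩
  rw [Fin.cast_val_eq_self]
  abel

lemma arcSet_union (n : ℕ) [NeZero n] (s : Fin n) (a b : ℕ) :
    arcSet n s (a + b) = arcSet n s a ∪ arcSet n (s + (a : Fin n)) b := by
  ext x
  simp only [arcSet, Finset.mem_union, Finset.mem_image, Finset.mem_range]
  constructor
  · rintro ⟨k, hk, rfl⟩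
    by_cases h : k < a
    · exact Or.inl ⟨k, h, rfl⟩
    · refine Or.inr ⟨k - a, by omega, ?_⟩
      rw [add_assoc, ← Nat.cast_add]
      have : a + (k - a) = k := by omega
      rw [this]
  · rintro (⟨k, hk, rfl⟩ | ⟨k, hk, rfl⟩)
    · exact ⟨k, by omega, rfl⟩
    · exact ⟨a + k, by omega, by rw [add_assoc, ← Nat.cast_add]⟩

lemma arcSet_start_inj (n : ℕ) [NeZero n] {s s' : Fin n} {l : ℕ} (hl : 0 < l)
    (h2 : 2 * l ≤ n + 1) (h : arcSet n s l = arcSet n s' l) : s = s' := by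
  have hs' : s' ∈ arcSet n s l := by
    rw [h]
    simp only [arcSet, Finset.mem_image, Finset.mem_range]
    exact ⟨0, hl, by simp⟩
  have hs : s ∈ arcSet n s' l := by
    rw [← h]
    simp only [arcSet, Finset.mem_image, Finset.mem_range]
    exact ⟨0, hl, by simp⟩
  simp only [arcSet, Finset.mem_image, Finset.mem_range] at hs hs'
  obtain ⟨k, hk, hks⟩ := hs'
  obtain ⟨k', hk', hk's⟩ := hs
  have hkk : ((k + k' : ℕ) : Fin n) = 0 := by
    have h3 : s + (((k + k' : ℕ)) : Fin n) = s + 0 := by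
      rw [add_zero, Nat.cast_add, ← add_assoc, hks, hk's]
    exact add_left_cancel h3
  have hdvd := Fin.natCast_eq_zero.mp hkk
  have hn : 0 < n := Nat.pos_of_ne_zero (NeZero.ne n)
  have hk0 : k = 0 := by
    rcases Nat.eq_zero_or_pos (k + k') with h0 | hpos
    · omega
    · have := Nat.le_of_dvd hpos hdvd; omega
  subst hk0
  simpa using hks

lemma sum_blockB (n : ℕ) [NeZero n] (V : Fin n → ℝ) (s0 : Fin n) (lA lB lC lD lE : ℕ)
    [NeZero (lB + lE)] (V' : Fin (lB + lE) → ℝ)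
    (hV' : ∀ t : Fin (lB + lE), V' t =
      if t.1 < lB then V (s0 + ((lA + t.1 : ℕ) : Fin n))
      else V (s0 + ((lA + lB + lC + lD + (t.1 - lB) : ℕ) : Fin n)))
    (a c : ℕ) (h : a + c ≤ lB) :
    ∑ k ∈ Finset.range c, V' (((a + k : ℕ)) : Fin (lB + lE)) =
      arcSum n V (s0 + ((lA + a : ℕ) : Fin n)) c := by
  unfold arcSum
  refine Finset.sum_congr rfl fun k hk => ?_
  rw [Finset.mem_range] at hk
  have hv : (((a + k : ℕ)) : Fin (lB + lE)).1 = a + k := by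
    rw [Fin.val_natCast]
    exact Nat.mod_eq_of_lt (by omega)
  rw [hV']
  simp only [hv]
  rw [if_pos (by omega)]
  rw [cast_base n s0 (lA + a) k (lA + (a + k)) (by omega)]

lemma sum_blockE (n : ℕ) [NeZero n] (V : Fin n → ℝ) (s0 : Fin n) (lA lB lC lD lE : ℕ)
    [NeZero (lB + lE)] (V' : Fin (lB + lE) → ℝ)
    (hV' : ∀ t : Fin (lB + lE), V' t =
      if t.1 < lB then V (s0 + ((lA + t.1 : ℕ) : Fin n))
      else V (s0 + ((lA + lB + lC + lD + (t.1 - lB) : ℕ) : Fin n)))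
    (a c : ℕ) (h1 : lB ≤ a) (h2 : a + c ≤ lB + lE) :
    ∑ k ∈ Finset.range c, V' (((a + k : ℕ)) : Fin (lB + lE)) =
      arcSum n V (s0 + ((lA + lB + lC + lD + (a - lB) : ℕ) : Fin n)) c := by
  unfold arcSum
  refine Finset.sum_congr rfl fun k hk => ?_
  rw [Finset.mem_range] at hk
  have hv : (((a + k : ℕ)) : Fin (lB + lE)).1 = a + k := by
    rw [Fin.val_natCast]
    exact Nat.mod_eq_of_lt (by omega)
  rw [hV']
  simp only [hv]
  rw [if_neg (by omega)]
  rw [cast_base n s0 (lA + lB + lC + lD + (a - lB)) k (lA + lB + lC + lD + (a + k - lB)) (by omega)]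

/-- concatenating the arcs `B` and `E` of a minimal-triple partition
gives a circular sequence `V\'` of odd length `l(B)+l(E)` in which `E` is a
half-circle of minimum size. -/
theorem E_min_halfcircle_of_concat (n : ℕ) (hn : Odd n) [NeZero n]
    (V : Fin n → ℝ) (hV : ∀ i, 0 ≤ V i)
    (hp : potV n V < (∑ i, V i) / 2)
    (s1 s2 s3 s0 : Fin n) (lA lB lC lD lE lF : ℕ)
    (hT : MinTriple n V s1 s2 s3)
    (hTP : TriplePartition n s1 s2 s3 s0 lA lB lC lD lE lF)
    [NeZero (lB + lE)]
    (V' : Fin (lB + lE) → ℝ)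
    (hV' : ∀ t : Fin (lB + lE), V' t =
      if t.1 < lB then V (s0 + ((lA + t.1 : ℕ) : Fin n))
      else V (s0 + ((lA + lB + lC + lD + (t.1 - lB) : ℕ) : Fin n))) :
    hcLen (lB + lE) = lE ∧
    ∀ t : Fin (lB + lE),
      hcSum (lB + lE) V' ((lB : ℕ) : Fin (lB + lE)) ≤ hcSum (lB + lE) V' t := by
  obtain ⟨hsum, hAD, hCF, hEB, hA2, hC2, hE2, hS1, hS2, hS3⟩ := hTP
  obtain ⟨hcov, hmin, hp1, hp2, hp3, hrep1, hrep2, hrep3⟩ := hT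
  have hhc : hcLen n = lC + lD + lE := by unfold hcLen; omega
  have hhc3 : hcLen n = lE + lF + lA := by unfold hcLen; omega
  have hm : hcLen (lB + lE) = lE := by unfold hcLen; omega
  -- pin down s2 and s3
  have hs2 : s2 = s0 + ((lA + lB : ℕ) : Fin n) := by
    unfold hcSet at hS2
    rw [hhc] at hS2
    exact arcSet_start_inj n (by omega) (by omega) hS2
  have hs3 : s3 = s0 + ((lA + lB + lC + lD : ℕ) : Fin n) := by
    unfold hcSet at hS3
    rw [hhc3] at hS3
    exact arcSet_start_inj n (by omega) (by omega) hS3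
  have hS2sum : hcSum n V s2 =
      arcSum n V (s0 + ((lA + lB : ℕ) : Fin n)) (lC + lD) +
      arcSum n V (s0 + ((lA + lB + lC + lD : ℕ) : Fin n)) lE := by
    unfold hcSum
    rw [hs2, hhc, arcSum_add,
      cast_base n s0 (lA + lB) (lC + lD) (lA + lB + lC + lD) (by omega)]
  have hS3sum : ∀ u : ℕ, u ≤ lE → hcSum n V s3 =
      arcSum n V (s0 + ((lA + lB + lC + lD : ℕ) : Fin n)) u +
      (arcSum n V (s0 + ((lA + lB + lC + lD + u : ℕ) : Fin n)) (lE - u) +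
       arcSum n V (s0 + ((lA + lB + lC + lD + lE : ℕ) : Fin n)) (lF + lA)) := by
    intro u hu
    unfold hcSum
    rw [hs3]
    rw [show hcLen n = u + ((lE - u) + (lF + lA)) from by rw [hhc3]; omega]
    rw [arcSum_add, arcSum_add,
      cast_base n s0 (lA + lB + lC + lD) u (lA + lB + lC + lD + u) rfl,
      cast_base n s0 (lA + lB + lC + lD + u) (lE - u) (lA + lB + lC + lD + lE) (by omega)]
  refine ⟨hm, ?_⟩
  have key : ∀ x : Fin (lB + lE), hcSum (lB + lE) V' x
      = ∑ k ∈ Finset.range lE, V' (((x.1 + k : ℕ)) : Fin (lB + lE)) := by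
    intro x
    unfold hcSum arcSum
    rw [hm]
    refine Finset.sum_congr rfl fun k _ => ?_
    congr 1
    rw [Nat.cast_add, Fin.cast_val_eq_self]
  have hvlB : (((lB : ℕ)) : Fin (lB + lE)).1 = lB := by
    rw [Fin.val_natCast]
    exact Nat.mod_eq_of_lt (by omega)
  have hE0 : hcSum (lB + lE) V' ((lB : ℕ) : Fin (lB + lE)) =
      arcSum n V (s0 + ((lA + lB + lC + lD : ℕ) : Fin n)) lE := by
    rw [key, hvlB]
    rw [sum_blockE n V s0 lA lB lC lD lE V' hV' lB lE le_rfl le_rfl]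
    rw [Nat.sub_self, Nat.add_zero]
  intro t
  have htlt : t.1 < lB + lE := t.isLt
  rcases le_or_gt t.1 lB with ht | ht
  · -- Case 1 : the half-circle of V' at t contains the start of E
    have hVt : hcSum (lB + lE) V' t =
        arcSum n V (s0 + ((lA + t.1 : ℕ) : Fin n)) (lB - t.1) +
        arcSum n V (s0 + ((lA + lB + lC + lD : ℕ) : Fin n)) (t.1 + 1) := by
      rw [key]
      rw [show Finset.range lE = Finset.range ((lB - t.1) + (t.1 + 1)) from by
        congr 1; omega]
      rw [Finset.sum_range_add]
      congr 1
      · exact sum_blockB n V s0 lA lB lC lD lE V' hV' t.1 (lB - t.1) (by omega)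
      · have hstep : ∀ j ∈ Finset.range (t.1 + 1),
            V' (((t.1 + ((lB - t.1) + j) : ℕ)) : Fin (lB + lE)) =
            V' (((lB + j : ℕ)) : Fin (lB + lE)) := by
          intro j _
          have he : t.1 + ((lB - t.1) + j) = lB + j := by omega
          rw [he]
        rw [Finset.sum_congr rfl hstep,
          sum_blockE n V s0 lA lB lC lD lE V' hV' lB (t.1 + 1) le_rfl (by omega),
          Nat.sub_self, Nat.add_zero]
    have hVT1 : hcSum n V (s0 + ((lA + t.1 : ℕ) : Fin n)) =
        arcSum n V (s0 + ((lA + t.1 : ℕ) : Fin n)) (lB - t.1) +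
        (arcSum n V (s0 + ((lA + lB : ℕ) : Fin n)) (lC + lD) +
         arcSum n V (s0 + ((lA + lB + lC + lD : ℕ) : Fin n)) (t.1 + 1)) := by
      unfold hcSum
      rw [show hcLen n = (lB - t.1) + ((lC + lD) + (t.1 + 1)) from by
        rw [hhc]; omega]
      rw [arcSum_add, arcSum_add,
        cast_base n s0 (lA + t.1) (lB - t.1) (lA + lB) (by omega),
        cast_base n s0 (lA + lB) (lC + lD) (lA + lB + lC + lD) (by omega)]
    have hcov1 : hcSet n s1 ∪ hcSet n (s0 + ((lA + t.1 : ℕ) : Fin n)) ∪ hcSet n s3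
        = Finset.univ := by
      apply Finset.eq_univ_of_forall
      intro y
      have hy' : y ∈ arcSet n s0 ((lA + lB + lC) + (lD + (lE + lF))) := by
        rw [show (lA + lB + lC) + (lD + (lE + lF)) = n from by omega, arcSet_full]
        exact Finset.mem_univ y
      rw [arcSet_union n s0 (lA + lB + lC) (lD + (lE + lF)),
        arcSet_union n (s0 + ((lA + lB + lC : ℕ) : Fin n)) lD (lE + lF)] at hy'
      simp only [Finset.mem_union] at hy' ⊢
      rcases hy' with h | h | h
      · exact Or.inl (Or.inl (by rw [hS1]; exact h))
      · refine Or.inl (Or.inr ?_)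
        show y ∈ arcSet n (s0 + ((lA + t.1 : ℕ) : Fin n)) (hcLen n)
        have hb : s0 + ((lA + lB + lC : ℕ) : Fin n) =
            (s0 + ((lA + t.1 : ℕ) : Fin n)) + (((lB - t.1) + lC : ℕ) : Fin n) :=
          (cast_base n s0 (lA + t.1) ((lB - t.1) + lC) (lA + lB + lC) (by omega)).symm
        rw [hb] at h
        have hle : ((lB - t.1) + lC) + lD ≤ hcLen n := by rw [hhc]; omega
        exact arcSet_mono n _ hle (arcSet_shift_subset n _ _ lD h)
      · refine Or.inr ?_
        rw [hS3]
        have hb : s0 + ((lA + lB + lC : ℕ) : Fin n) + ((lD : ℕ) : Fin n) =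
            s0 + ((lA + lB + lC + lD : ℕ) : Fin n) :=
          cast_base n s0 (lA + lB + lC) lD (lA + lB + lC + lD) rfl
        rw [hb] at h
        exact arcSet_mono n _ (by omega) h
    have hineq := hrep2 _ hcov1
    rw [hS2sum, hVT1] at hineq
    rw [hE0, hVt]
    linarith
  · -- Case 2 : the half-circle of V' at t contains the end of E
    have hVt : hcSum (lB + lE) V' t =
        arcSum n V (s0 + ((lA + lB + lC + lD + (t.1 - lB) : ℕ) : Fin n))
          (lE - (t.1 - lB)) +
        arcSum n V (s0 + ((lA + 0 : ℕ) : Fin n)) (t.1 - lB) := by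
      rw [key]
      rw [show Finset.range lE = Finset.range ((lE - (t.1 - lB)) + (t.1 - lB)) from by
        congr 1; omega]
      rw [Finset.sum_range_add]
      congr 1
      · exact sum_blockE n V s0 lA lB lC lD lE V' hV' t.1 (lE - (t.1 - lB))
          (by omega) (by omega)
      · have hstep : ∀ j ∈ Finset.range (t.1 - lB),
            V' (((t.1 + ((lE - (t.1 - lB)) + j) : ℕ)) : Fin (lB + lE)) =
            V' (((0 + j : ℕ)) : Fin (lB + lE)) := by
          intro j _
          have he : t.1 + ((lE - (t.1 - lB)) + j) = (lB + lE) + (0 + j) := by omega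
          rw [he, Nat.cast_add, Fin.natCast_self, zero_add]
        rw [Finset.sum_congr rfl hstep]
        exact sum_blockB n V s0 lA lB lC lD lE V' hV' 0 (t.1 - lB) (by omega)
    have hVT2 : hcSum n V (s0 + ((lA + lB + lC + lD + (t.1 - lB) : ℕ) : Fin n)) =
        arcSum n V (s0 + ((lA + lB + lC + lD + (t.1 - lB) : ℕ) : Fin n))
          (lE - (t.1 - lB)) +
        (arcSum n V (s0 + ((lA + lB + lC + lD + lE : ℕ) : Fin n)) (lF + lA) +
         arcSum n V (s0 + ((lA + 0 : ℕ) : Fin n)) (t.1 - lB)) := by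
      unfold hcSum
      rw [show hcLen n = (lE - (t.1 - lB)) + ((lF + lA) + (t.1 - lB)) from by
        rw [hhc3]; omega]
      rw [arcSum_add, arcSum_add,
        cast_base n s0 (lA + lB + lC + lD + (t.1 - lB)) (lE - (t.1 - lB))
          (lA + lB + lC + lD + lE) (by omega),
        cast_base_wrap n s0 (lA + lB + lC + lD + lE) (lF + lA) (lA + 0) (by omega)]
    have hE0' : arcSum n V (s0 + ((lA + lB + lC + lD : ℕ) : Fin n)) lE =
        arcSum n V (s0 + ((lA + lB + lC + lD : ℕ) : Fin n)) (t.1 - lB) +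
        arcSum n V (s0 + ((lA + lB + lC + lD + (t.1 - lB) : ℕ) : Fin n))
          (lE - (t.1 - lB)) := by
      have h := arcSum_add n V (s0 + ((lA + lB + lC + lD : ℕ) : Fin n))
        (t.1 - lB) (lE - (t.1 - lB))
      rw [cast_base n s0 (lA + lB + lC + lD) (t.1 - lB)
        (lA + lB + lC + lD + (t.1 - lB)) rfl] at h
      rw [show (t.1 - lB) + (lE - (t.1 - lB)) = lE from by omega] at h
      exact h
    have hcov2 : hcSet n s1 ∪ hcSet n s2 ∪
        hcSet n (s0 + ((lA + lB + lC + lD + (t.1 - lB) : ℕ) : Fin n))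
        = Finset.univ := by
      apply Finset.eq_univ_of_forall
      intro y
      have hy' : y ∈ arcSet n s0 ((lA + lB + lC) + ((lD + lE) + lF)) := by
        rw [show (lA + lB + lC) + ((lD + lE) + lF) = n from by omega, arcSet_full]
        exact Finset.mem_univ y
      rw [arcSet_union n s0 (lA + lB + lC) ((lD + lE) + lF),
        arcSet_union n (s0 + ((lA + lB + lC : ℕ) : Fin n)) (lD + lE) lF] at hy'
      simp only [Finset.mem_union] at hy' ⊢
      rcases hy' with h | h | h
      · exact Or.inl (Or.inl (by rw [hS1]; exact h))
      · refine Or.inl (Or.inr ?_)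
        rw [hS2]
        have hb : s0 + ((lA + lB + lC : ℕ) : Fin n) =
            (s0 + ((lA + lB : ℕ) : Fin n)) + ((lC : ℕ) : Fin n) :=
          (cast_base n s0 (lA + lB) lC (lA + lB + lC) rfl).symm
        rw [hb] at h
        exact arcSet_mono n _ (by omega) (arcSet_shift_subset n _ lC (lD + lE) h)
      · refine Or.inr ?_
        show y ∈ arcSet n
          (s0 + ((lA + lB + lC + lD + (t.1 - lB) : ℕ) : Fin n)) (hcLen n)
        have hb : s0 + ((lA + lB + lC : ℕ) : Fin n) + ((lD + lE : ℕ) : Fin n) =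
            (s0 + ((lA + lB + lC + lD + (t.1 - lB) : ℕ) : Fin n)) +
              ((lE - (t.1 - lB) : ℕ) : Fin n) := by
          rw [cast_base n s0 (lA + lB + lC) (lD + lE) (lA + lB + lC + lD + lE)
              (by omega),
            cast_base n s0 (lA + lB + lC + lD + (t.1 - lB)) (lE - (t.1 - lB))
              (lA + lB + lC + lD + lE) (by omega)]
        rw [hb] at h
        have hle : (lE - (t.1 - lB)) + lF ≤ hcLen n := by rw [hhc3]; omega
        exact arcSet_mono n _ hle (arcSet_shift_subset n _ _ lF h)
    have hineq := hrep3 _ hcov2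
    rw [hS3sum (t.1 - lB) (by omega), hVT2] at hineq
    rw [hE0, hE0', hVt]
    linarith
end
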